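/- arXiv:2312.12992 — 2 statements merged into one kernel-verified Lean document; each statement's English description precedes it below -/
import Mathlib

section
/- Let m, k, n ≥ 1 be integers. If P ∈ ℂ[X] is monic of degree n with sup_{z ∈ E_m} |P(z)| = t_n(E_m) (P is the Chebyshev polynomial of E_m of degree n), then the polynomial Q(z) := P(z^k) is monic of degree kn and satisfies sup_{z ∈ E_{mk}} |Q(z)| = t_{kn}(E_{mk}); in particular t_{kn}(E_{mk}) = t_n(E_m). -/
/-- The `n`-th Chebyshev norm of a set `E ⊆ ℂ`:
`t_n(E) = inf { sup_{z ∈ E} |P(z)| : P monic of degree n }`. -/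
noncomputable def chebNorm (E : Set ℂ) (n : ℕ) : ℝ :=
  sInf { r : ℝ | ∃ P : Polynomial ℂ, P.Monic ∧ P.natDegree = n ∧
    r = ⨆ z ∈ E, ‖P.eval z‖ }

/-- The star `E_m = { z ∈ ℂ : z^m ∈ [-2, 2] }`. -/
def Estar (m : ℕ) : Set ℂ := { z : ℂ | ∃ x ∈ Set.Icc (-2 : ℝ) 2, (x : ℂ) = z ^ m }

open Polynomial Finset

namespace ChebAux

lemma estar_mul (m k : ℕ) : Estar (m * k) = {z : ℂ | z ^ k ∈ Estar m} := by
  ext z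
  simp only [Estar, Set.mem_setOf_eq, mul_comm m k, pow_mul]

lemma estar_compact (m : ℕ) (hm : 1 ≤ m) : IsCompact (Estar m) := by
  have hcl : IsClosed (Estar m) := by
    have h1 : Estar m = (fun z : ℂ => z ^ m) ⁻¹' ((fun x : ℝ => (x : ℂ)) '' Set.Icc (-2) 2) := by
      ext z
      simp only [Estar, Set.mem_setOf_eq, Set.mem_preimage, Set.mem_image]
    rw [h1]
    exact ((isCompact_Icc.image Complex.continuous_ofReal).isClosed).preimage (continuous_pow m)
  have hsub : Estar m ⊆ Metric.closedBall (0 : ℂ) 2 := by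
    rintro z ⟨x, hx, hxz⟩
    simp only [Metric.mem_closedBall, dist_zero_right]
    by_contra h
    push_neg at h
    have h1 : (1 : ℝ) ≤ ‖z‖ := le_trans (by norm_num) h.le
    have h2 : ‖z‖ ≤ ‖z‖ ^ m := le_self_pow₀ h1 (by omega)
    have h3 : ‖z ^ m‖ ≤ 2 := by
      rw [← hxz]
      rw [Complex.norm_real, Real.norm_eq_abs, abs_le]
      exact ⟨hx.1, hx.2⟩
    rw [norm_pow] at h3
    linarith
  exact (isCompact_closedBall (0 : ℂ) 2).of_isClosed_subset hcl hsub

lemma bdd_image (m : ℕ) (hm : 1 ≤ m) (R : Polynomial ℂ) :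
    BddAbove ((fun z => ‖R.eval z‖) '' Estar m) :=
  ((estar_compact m hm).image (continuous_norm.comp R.continuous)).bddAbove

lemma le_biSup {E : Set ℂ} {f : ℂ → ℝ} (h : BddAbove (f '' E)) {z : ℂ} (hz : z ∈ E) :
    f z ≤ ⨆ w ∈ E, f w := by
  have hb : BddAbove (Set.range fun w => ⨆ _ : w ∈ E, f w) := by
    obtain ⟨M, hM⟩ := h
    refine ⟨max M 0, ?_⟩
    rintro x ⟨w, rfl⟩
    by_cases hw : w ∈ E
    · have h2 : (⨆ _ : w ∈ E, f w) = f w := by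
        haveI : Nonempty (w ∈ E) := ⟨hw⟩
        exact ciSup_const
      show (⨆ _ : w ∈ E, f w) ≤ max M 0
      rw [h2]
      exact le_max_of_le_left (hM (Set.mem_image_of_mem f hw))
    · have h2 : (⨆ _ : w ∈ E, f w) = 0 := by
        haveI : IsEmpty (w ∈ E) := ⟨hw⟩
        exact Real.iSup_of_isEmpty _
      show (⨆ _ : w ∈ E, f w) ≤ max M 0
      rw [h2]
      exact le_max_right _ _
  have h1 : f z = ⨆ _ : z ∈ E, f z := by
    haveI : Nonempty (z ∈ E) := ⟨hz⟩
    exact ciSup_const.symm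
  rw [h1]
  exact le_ciSup hb z

lemma biSup_nonneg (E : Set ℂ) (R : Polynomial ℂ) :
    0 ≤ ⨆ z ∈ E, ‖R.eval z‖ :=
  Real.iSup_nonneg fun z => Real.iSup_nonneg fun _ => (norm_nonneg _)

lemma biSup_pow (k : ℕ) (hk : 1 ≤ k) (E : Set ℂ) (f : ℂ → ℝ) :
    (⨆ z ∈ {z : ℂ | z ^ k ∈ E}, f (z ^ k)) = ⨆ w ∈ E, f w := by
  rw [iSup, iSup]
  apply csSup_eq_csSup_of_forall_exists_le
  · rintro x ⟨z, rfl⟩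
    exact ⟨⨆ _ : z ^ k ∈ E, f (z ^ k), ⟨z ^ k, rfl⟩, le_rfl⟩
  · rintro y ⟨w, rfl⟩
    obtain ⟨z, rfl⟩ := IsAlgClosed.exists_pow_nat_eq w (show 0 < k by omega)
    exact ⟨⨆ _ : z ^ k ∈ E, f (z ^ k), ⟨z, rfl⟩, le_rfl⟩

lemma sup_comp (m k : ℕ) (hk : 1 ≤ k) (P : Polynomial ℂ) :
    (⨆ z ∈ Estar (m * k), ‖(P.comp (X ^ k)).eval z‖)
      = ⨆ w ∈ Estar m, ‖P.eval w‖ := by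
  have h : ∀ z : ℂ, (P.comp (X ^ k)).eval z = P.eval (z ^ k) := by
    intro z; simp [eval_comp]
  rw [estar_mul]
  simp only [h]
  exact biSup_pow k hk (Estar m) (fun w => ‖P.eval w‖)

lemma cheb_bddBelow (E : Set ℂ) (n : ℕ) :
    BddBelow { r : ℝ | ∃ P : Polynomial ℂ, P.Monic ∧ P.natDegree = n ∧
      r = ⨆ z ∈ E, ‖P.eval z‖ } := by
  refine ⟨0, ?_⟩
  rintro r ⟨P, _, _, rfl⟩
  exact biSup_nonneg E P

lemma cheb_nonempty (E : Set ℂ) (n : ℕ) :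
    { r : ℝ | ∃ P : Polynomial ℂ, P.Monic ∧ P.natDegree = n ∧
      r = ⨆ z ∈ E, ‖P.eval z‖ }.Nonempty :=
  ⟨_, X ^ n, monic_X_pow n, natDegree_X_pow n, rfl⟩

lemma geom_aux {k : ℕ} (hk : 1 ≤ k) {ζ : ℂ} (hζ : IsPrimitiveRoot ζ k) (i : ℕ) :
    (∑ j ∈ Finset.range k, (ζ ^ i) ^ j) = if k ∣ i then (k : ℂ) else 0 := by
  by_cases h : k ∣ i
  · rw [if_pos h]
    have h1 : ζ ^ i = 1 := (hζ.pow_eq_one_iff_dvd i).mpr h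
    simp [h1]
  · rw [if_neg h]
    have h1 : ζ ^ i ≠ 1 := fun hc => h ((hζ.pow_eq_one_iff_dvd i).mp hc)
    have h2 : (ζ ^ i) ^ k = 1 := by
      rw [← pow_mul, mul_comm, pow_mul, hζ.pow_eq_one, one_pow]
    rw [geom_sum_eq h1, h2]
    simp

lemma filter_eq (k n : ℕ) (hk : 1 ≤ k) :
    (Finset.range (k * n + 1)).filter (fun i => k ∣ i)
      = (Finset.range (n + 1)).image (fun i => k * i) := by
  ext i
  simp only [mem_filter, mem_range, mem_image]
  constructor
  · rintro ⟨hi, c, rfl⟩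
    refine ⟨c, ?_, rfl⟩
    have : k * c ≤ k * n := by omega
    have := Nat.le_of_mul_le_mul_left this (by omega : 0 < k)
    omega
  · rintro ⟨c, hc, rfl⟩
    refine ⟨?_, ⟨c, rfl⟩⟩
    have : k * c ≤ k * n := Nat.mul_le_mul_left k (by omega)
    omega

lemma eval_sym {k n : ℕ} (hk : 1 ≤ k) {ζ : ℂ} (hζ : IsPrimitiveRoot ζ k)
    (R : Polynomial ℂ) (hRdeg : R.natDegree = k * n) (z : ℂ) :
    ∑ j ∈ Finset.range k, R.eval (ζ ^ j * z)
      = (k : ℂ) * ∑ i ∈ Finset.range (n + 1), R.coeff (k * i) * z ^ (k * i) := by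
  have heval : ∀ j : ℕ, R.eval (ζ ^ j * z)
      = ∑ i ∈ Finset.range (k * n + 1), R.coeff i * ((ζ ^ i) ^ j * z ^ i) := by
    intro j
    rw [eval_eq_sum_range, hRdeg]
    congr 1
    ext i
    rw [mul_pow, ← pow_mul, ← pow_mul, mul_comm i j]
  calc ∑ j ∈ Finset.range k, R.eval (ζ ^ j * z)
      = ∑ j ∈ Finset.range k, ∑ i ∈ Finset.range (k * n + 1),
          R.coeff i * ((ζ ^ i) ^ j * z ^ i) := by
        exact Finset.sum_congr rfl fun j _ => heval j
    _ = ∑ i ∈ Finset.range (k * n + 1), ∑ j ∈ Finset.range k,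
          R.coeff i * ((ζ ^ i) ^ j * z ^ i) := Finset.sum_comm
    _ = ∑ i ∈ Finset.range (k * n + 1),
          (R.coeff i * z ^ i) * ∑ j ∈ Finset.range k, (ζ ^ i) ^ j := by
        refine Finset.sum_congr rfl fun i _ => ?_
        rw [Finset.mul_sum]
        refine Finset.sum_congr rfl fun j _ => ?_
        ring
    _ = ∑ i ∈ Finset.range (k * n + 1),
          (R.coeff i * z ^ i) * (if k ∣ i then (k : ℂ) else 0) := by
        refine Finset.sum_congr rfl fun i _ => ?_
        rw [geom_aux hk hζ i]
    _ = ∑ i ∈ (Finset.range (k * n + 1)).filter (fun i => k ∣ i),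
          (R.coeff i * z ^ i) * (k : ℂ) := by
        rw [Finset.sum_filter]
        refine Finset.sum_congr rfl fun i _ => ?_
        by_cases h : k ∣ i <;> simp [h]
    _ = ∑ i ∈ Finset.range (n + 1), (R.coeff (k * i) * z ^ (k * i)) * (k : ℂ) := by
        rw [filter_eq k n hk, Finset.sum_image]
        intro a _ b _ hab
        exact Nat.eq_of_mul_eq_mul_left (by omega) hab
    _ = (k : ℂ) * ∑ i ∈ Finset.range (n + 1), R.coeff (k * i) * z ^ (k * i) := by
        rw [Finset.mul_sum]
        refine Finset.sum_congr rfl fun i _ => ?_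
        ring

/-- The symmetrized polynomial. -/
noncomputable def Bpoly (k n : ℕ) (R : Polynomial ℂ) : Polynomial ℂ :=
  ∑ i ∈ Finset.range (n + 1), Polynomial.monomial i (R.coeff (k * i))

lemma Bpoly_eval (k n : ℕ) (R : Polynomial ℂ) (w : ℂ) :
    (Bpoly k n R).eval w = ∑ i ∈ Finset.range (n + 1), R.coeff (k * i) * w ^ i := by
  simp [Bpoly, eval_finset_sum, eval_monomial]

lemma Bpoly_coeff_n (k n : ℕ) (R : Polynomial ℂ) :
    (Bpoly k n R).coeff n = R.coeff (k * n) := by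
  rw [Bpoly, finset_sum_coeff]
  rw [Finset.sum_eq_single n]
  · simp [coeff_monomial]
  · intro b _ hb
    simp [coeff_monomial, hb]
  · intro h
    exact absurd (self_mem_range_succ n) h

lemma Bpoly_natDegree_le (k n : ℕ) (R : Polynomial ℂ) : (Bpoly k n R).natDegree ≤ n := by
  apply natDegree_sum_le_of_forall_le
  intro i hi
  exact le_trans (natDegree_monomial_le _) (by simp at hi; omega)

lemma Bpoly_monic {k n : ℕ} {R : Polynomial ℂ} (hR : R.Monic) (hRdeg : R.natDegree = k * n) :
    (Bpoly k n R).Monic := by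
  apply monic_of_natDegree_le_of_coeff_eq_one n (Bpoly_natDegree_le k n R)
  rw [Bpoly_coeff_n, ← hRdeg]
  exact hR.coeff_natDegree

lemma Bpoly_natDegree {k n : ℕ} {R : Polynomial ℂ} (hR : R.Monic) (hRdeg : R.natDegree = k * n) :
    (Bpoly k n R).natDegree = n := by
  refine le_antisymm (Bpoly_natDegree_le k n R) ?_
  apply le_natDegree_of_ne_zero
  rw [Bpoly_coeff_n, ← hRdeg, hR.coeff_natDegree]
  exact one_ne_zero

lemma cheb_eq (m k n : ℕ) (hm : 1 ≤ m) (hk : 1 ≤ k) (hn : 1 ≤ n) :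
    chebNorm (Estar (m * k)) (k * n) = chebNorm (Estar m) n := by
  have hmk : 1 ≤ m * k := Nat.one_le_iff_ne_zero.mpr (by positivity)
  apply le_antisymm
  · -- subset direction : chebNorm (E_{mk}) (kn) ≤ chebNorm (E_m) n
    apply csInf_le_csInf (cheb_bddBelow _ _) (cheb_nonempty _ _)
    rintro r ⟨P', hP'm, hP'd, rfl⟩
    refine ⟨P'.comp (X ^ k), ?_, ?_, (sup_comp m k hk P').symm⟩
    · rw [Monic, leadingCoeff_comp (by rw [natDegree_X_pow]; omega)]
      rw [hP'm.leadingCoeff, leadingCoeff_X_pow, one_pow, one_mul]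
    · rw [natDegree_comp, natDegree_X_pow, hP'd, mul_comm]
  · -- hard direction
    apply le_csInf (cheb_nonempty _ _)
    rintro r ⟨R, hRm, hRdeg, rfl⟩
    set r := ⨆ z ∈ Estar (m * k), ‖R.eval z‖ with hr
    obtain ⟨ζ, hζ⟩ : ∃ ζ : ℂ, IsPrimitiveRoot ζ k :=
      ⟨_, Complex.isPrimitiveRoot_exp k (by omega)⟩
    set B := Bpoly k n R with hB
    have hBm : B.Monic := Bpoly_monic hRm hRdeg
    have hBd : B.natDegree = n := Bpoly_natDegree hRm hRdeg
    have h1 : chebNorm (Estar m) n ≤ ⨆ w ∈ Estar m, ‖B.eval w‖ :=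
      csInf_le (cheb_bddBelow _ _) ⟨B, hBm, hBd, rfl⟩
    refine le_trans h1 ?_
    -- show sup of |B| over E_m ≤ r
    have hr0 : 0 ≤ r := biSup_nonneg _ _
    apply Real.iSup_le _ hr0
    intro w
    apply Real.iSup_le _ hr0
    intro hw
    -- w ∈ Estar m; pick z with z^k = w
    obtain ⟨z, rfl⟩ := IsAlgClosed.exists_pow_nat_eq w (show 0 < k by omega)
    have hjmem : ∀ j : ℕ, ζ ^ j * z ∈ Estar (m * k) := by
      intro j
      rw [estar_mul]
      show (ζ ^ j * z) ^ k ∈ Estar m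
      have : (ζ ^ j * z) ^ k = z ^ k := by
        rw [mul_pow, ← pow_mul, mul_comm j k, pow_mul, hζ.pow_eq_one, one_pow, one_mul]
      rw [this]
      exact hw
    have hkey : (k : ℂ) * B.eval (z ^ k) = ∑ j ∈ Finset.range k, R.eval (ζ ^ j * z) := by
      rw [eval_sym hk hζ R hRdeg z, Bpoly_eval]
      congr 1
      refine Finset.sum_congr rfl fun i _ => ?_
      rw [← pow_mul, mul_comm k i]
    have hbound : ∀ j ∈ Finset.range k, ‖R.eval (ζ ^ j * z)‖ ≤ r := by
      intro j _
      exact le_biSup (bdd_image (m * k) hmk R) (hjmem j)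
    have h2 : (k : ℝ) * ‖B.eval (z ^ k)‖ ≤ (k : ℝ) * r := by
      calc (k : ℝ) * ‖B.eval (z ^ k)‖
          = ‖(k : ℂ) * B.eval (z ^ k)‖ := by
            rw [norm_mul, Complex.norm_natCast]
        _ = ‖∑ j ∈ Finset.range k, R.eval (ζ ^ j * z)‖ := by rw [hkey]
        _ ≤ ∑ j ∈ Finset.range k, ‖R.eval (ζ ^ j * z)‖ :=
            norm_sum_le _ _
        _ ≤ ∑ _j ∈ Finset.range k, r := Finset.sum_le_sum hbound
        _ = (k : ℝ) * r := by rw [Finset.sum_const, card_range, nsmul_eq_mul]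
    have hkpos : (0 : ℝ) < k := by exact_mod_cast (show 0 < k by omega)
    exact le_of_mul_le_mul_left h2 hkpos

end ChebAux

open ChebAux in
/-- If `P` is the degree-`n` Chebyshev polynomial of `E_m`, then
`Q(z) = P(z^k)` is the degree-`kn` Chebyshev polynomial of `E_{mk}`;
in particular `t_{kn}(E_{mk}) = t_n(E_m)`. -/
theorem chebyshev_Estar_compose_pow (m k n : ℕ) (hm : 1 ≤ m) (hk : 1 ≤ k) (hn : 1 ≤ n)
    (P : Polynomial ℂ) (hmonic : P.Monic) (hdeg : P.natDegree = n)
    (hmin : (⨆ z ∈ Estar m, ‖P.eval z‖) = chebNorm (Estar m) n) :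
    (P.comp (Polynomial.X ^ k)).Monic ∧
    (P.comp (Polynomial.X ^ k)).natDegree = k * n ∧
    (⨆ z ∈ Estar (m * k), ‖(P.comp (Polynomial.X ^ k)).eval z‖)
      = chebNorm (Estar (m * k)) (k * n) ∧
    chebNorm (Estar (m * k)) (k * n) = chebNorm (Estar m) n := by
  have hcheb := cheb_eq m k n hm hk hn
  refine ⟨?_, ?_, ?_, hcheb⟩
  · rw [Monic, leadingCoeff_comp (by rw [natDegree_X_pow]; omega)]
    rw [hmonic.leadingCoeff, leadingCoeff_X_pow, one_pow, one_mul]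
  · rw [natDegree_comp, natDegree_X_pow, hdeg, mul_comm]
  · rw [sup_comp m k hk P, hmin, hcheb]
end

section
/- Let m ≥ 1, n ≥ 0 and 0 ≤ l < 2m be integers with N := 2nm + l ≥ 1. Then the Chebyshev norm of E_m of degree N is given by the weighted one-dimensional extremal problem t_N(E_m) = 2^{n + l/(2m)} · inf{ sup_{x ∈ [−1,1]} (1 + x)^{l/(2m)} |Q(x)| : Q ∈ ℝ[X] monic of degree n }. -/
open Finset Polynomial

/-! ### Auxiliary lemmas about real suprema -/

lemma real_biSup_le {β : Type*} {E : Set β} {f : β → ℝ} {B : ℝ} (hB : 0 ≤ B)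
    (h : ∀ x ∈ E, f x ≤ B) : (⨆ x ∈ E, f x) ≤ B :=
  Real.iSup_le (fun x => Real.iSup_le (fun hx => h x hx) hB) hB

lemma real_biSup_nonneg {β : Type*} {E : Set β} {f : β → ℝ}
    (h : ∀ x ∈ E, 0 ≤ f x) : 0 ≤ ⨆ x ∈ E, f x :=
  Real.iSup_nonneg fun x => Real.iSup_nonneg fun hx => h x hx

lemma le_real_biSup {β : Type*} {E : Set β} {f : β → ℝ} {B : ℝ} (hB : 0 ≤ B)
    (h : ∀ x ∈ E, f x ≤ B) {z : β} (hz : z ∈ E) : f z ≤ ⨆ x ∈ E, f x := by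
  have hbdd : BddAbove (Set.range fun x => ⨆ _ : x ∈ E, f x) := by
    refine ⟨B, ?_⟩
    rintro r ⟨x, rfl⟩
    exact Real.iSup_le (fun hx => h x hx) hB
  have h1 : (⨆ _ : z ∈ E, f z) = f z := ciSup_pos (f := fun _ : z ∈ E => f z) hz
  calc f z = ⨆ _ : z ∈ E, f z := h1.symm
    _ ≤ ⨆ x ∈ E, f x := le_ciSup hbdd z

/-! ### Sums of roots of unity and coefficient filtering -/

lemma sum_zpow_root {d : ℕ} (hd : d ≠ 0) {ω : ℂ} (hω : IsPrimitiveRoot ω d) (r : ℤ) :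
    ∑ k ∈ Finset.range d, ω ^ (r * (k : ℤ)) = if (d : ℤ) ∣ r then (d : ℂ) else 0 := by
  by_cases h : (d : ℤ) ∣ r
  · simp only [h, if_true]
    have hcongr : ∀ k ∈ Finset.range d, ω ^ (r * (k : ℤ)) = 1 := by
      intro k _
      rw [zpow_mul, (hω.zpow_eq_one_iff_dvd r).2 h, one_zpow]
    rw [Finset.sum_congr rfl hcongr]
    simp
  · simp only [h, if_false]
    have h1 : ω ^ r ≠ 1 := fun hc => h ((hω.zpow_eq_one_iff_dvd r).1 hc)
    have hcongr : ∀ k ∈ Finset.range d, ω ^ (r * (k : ℤ)) = (ω ^ r) ^ k := by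
      intro k _
      rw [zpow_mul, zpow_natCast]
    rw [Finset.sum_congr rfl hcongr, geom_sum_eq h1]
    have h2 : (ω ^ r) ^ d = 1 := by
      rw [← zpow_natCast, ← zpow_mul, mul_comm, zpow_mul, zpow_natCast, hω.pow_eq_one, one_zpow]
    rw [h2]
    simp

lemma filter_range_eq (d n l N : ℕ) (hd : d ≠ 0) (hl : l < d) (hN : N = n * d + l) :
    (Finset.range (N + 1)).filter (fun i : ℕ => (d : ℤ) ∣ (i : ℤ) - (N : ℤ))
      = (Finset.range (n + 1)).image (fun j => j * d + l) := by
  have hd' : (0 : ℤ) < d := by exact_mod_cast Nat.pos_of_ne_zero hd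
  have hNz : (N : ℤ) = (n : ℤ) * d + l := by exact_mod_cast hN
  ext i
  simp only [Finset.mem_filter, Finset.mem_range, Finset.mem_image]
  constructor
  · rintro ⟨hi, s, hs⟩
    have hsle : s ≤ 0 := by
      by_contra hc
      push_neg at hc
      have h1 : (d : ℤ) ≤ (d : ℤ) * s := le_mul_of_one_le_right (le_of_lt hd') hc
      omega
    have hge : (0 : ℤ) ≤ (n : ℤ) + s := by
      by_contra hc
      push_neg at hc
      have h2 : (d : ℤ) * s ≤ (d : ℤ) * (-(n : ℤ) - 1) :=
        mul_le_mul_of_nonneg_left (by omega) (le_of_lt hd')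
      have h3 : (d : ℤ) * (-(n : ℤ) - 1) = -((n : ℤ) * d) - d := by ring
      omega
    refine ⟨((n : ℤ) + s).toNat, by omega, ?_⟩
    have htn : ((((n : ℤ) + s).toNat : ℤ)) = (n : ℤ) + s := Int.toNat_of_nonneg hge
    have key : ((((n : ℤ) + s).toNat : ℤ)) * d + l = i := by
      rw [htn, add_mul, mul_comm s (d : ℤ)]
      omega
    exact_mod_cast key
  · rintro ⟨j, hj, rfl⟩
    constructor
    · have : j * d ≤ n * d := Nat.mul_le_mul_right d (by omega)
      omega
    · refine ⟨(j : ℤ) - n, ?_⟩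
      push_cast
      rw [hNz]
      push_cast
      ring

lemma filter_sum (d n l N : ℕ) (hd : d ≠ 0) (hl : l < d) (hN : N = n * d + l)
    {ω : ℂ} (hω : IsPrimitiveRoot ω d) (P : Polynomial ℂ) (hP : P.natDegree = N) (z : ℂ) :
    ∑ k ∈ Finset.range d, ω ^ (-((k : ℤ) * (N : ℤ))) * P.eval (ω ^ k * z)
      = (d : ℂ) * ∑ j ∈ Finset.range (n + 1), P.coeff (j * d + l) * z ^ (j * d + l) := by
  have hω0 : ω ≠ 0 := hω.ne_zero hd
  have step1 : ∀ k ∈ Finset.range d, ω ^ (-((k:ℤ) * (N:ℤ))) * P.eval (ω ^ k * z)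
      = ∑ i ∈ Finset.range (N+1), (P.coeff i * z ^ i) * ω ^ (((i:ℤ) - N) * (k:ℤ)) := by
    intro k _
    rw [Polynomial.eval_eq_sum_range, hP, Finset.mul_sum]
    refine Finset.sum_congr rfl fun i _ => ?_
    have hz2 : ω ^ (-((k:ℤ) * (N:ℤ))) * ω ^ ((k * i : ℕ) : ℤ) = ω ^ (((i:ℤ) - N) * (k:ℤ)) := by
      rw [← zpow_add₀ hω0]
      congr 1
      push_cast
      ring
    calc ω ^ (-((k:ℤ)*(N:ℤ))) * (P.coeff i * (ω ^ k * z) ^ i)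
        = (P.coeff i * z ^ i) * (ω ^ (-((k:ℤ)*(N:ℤ))) * ω ^ ((k*i:ℕ):ℤ)) := by
          rw [zpow_natCast, mul_pow, ← pow_mul]
          ring
      _ = (P.coeff i * z ^ i) * ω ^ (((i:ℤ) - N) * (k:ℤ)) := by rw [hz2]
  rw [Finset.sum_congr rfl step1, Finset.sum_comm]
  have step2 : ∀ i ∈ Finset.range (N+1),
      ∑ k ∈ Finset.range d, (P.coeff i * z ^ i) * ω ^ (((i:ℤ) - N) * (k:ℤ))
        = if (d:ℤ) ∣ ((i:ℤ) - N) then (d:ℂ) * (P.coeff i * z ^ i) else 0 := by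
    intro i _
    rw [← Finset.mul_sum, sum_zpow_root hd hω ((i:ℤ) - N)]
    split_ifs <;> ring
  rw [Finset.sum_congr rfl step2, ← Finset.sum_filter, filter_range_eq d n l N hd hl hN,
    Finset.sum_image (fun a _ b _ h => Nat.eq_of_mul_eq_mul_right (Nat.pos_of_ne_zero hd)
      (Nat.add_right_cancel h)), Finset.mul_sum]

/-! ### rpow helper -/

lemma pow_eq_rpow_of_pow_eq {d l : ℕ} (hd : d ≠ 0) {a b : ℝ} (ha : 0 ≤ a)
    (hb : 0 ≤ b) (hab : a ^ d = b) : a ^ l = b ^ ((l : ℝ) / d) := by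
  have hdR : ((d : ℝ)) ≠ 0 := Nat.cast_ne_zero.2 hd
  have ha' : a = b ^ ((d : ℝ))⁻¹ := by
    rw [← hab, ← Real.rpow_natCast a d, ← Real.rpow_mul ha, mul_inv_cancel₀ hdR, Real.rpow_one]
  calc a ^ l = (b ^ ((d : ℝ))⁻¹) ^ (l : ℝ) := by rw [← ha', Real.rpow_natCast]
    _ = b ^ (((d : ℝ))⁻¹ * l) := (Real.rpow_mul hb _ _).symm
    _ = b ^ ((l : ℝ) / d) := by rw [inv_mul_eq_div]
      -- careful: d⁻¹ * l = l / d

/-! ### Basic facts about `Estar` -/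

lemma estar_abs_le {m : ℕ} (hm : 1 ≤ m) {z : ℂ} (hz : z ∈ Estar m) : ‖z‖ ≤ 2 := by
  obtain ⟨t, ht, htz⟩ := hz
  have h1 : ‖z‖ ^ m = |t| := by
    rw [← norm_pow, ← htz, Complex.norm_real, Real.norm_eq_abs]
  by_contra hc
  push_neg at hc
  have h2 : (2:ℝ) < ‖z‖ ^ m :=
    lt_of_lt_of_le hc (le_self_pow₀ (by linarith) (by omega))
  rw [h1] at h2
  have h3 : |t| ≤ 2 := abs_le.2 ⟨ht.1, ht.2⟩
  linarith

lemma abs_eval_le_of_mem {m : ℕ} (hm : 1 ≤ m) (P : Polynomial ℂ) {z : ℂ} (hz : z ∈ Estar m) :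
    ‖P.eval z‖
      ≤ ∑ i ∈ Finset.range (P.natDegree + 1), ‖P.coeff i‖ * 2 ^ i := by
  rw [Polynomial.eval_eq_sum_range]
  refine le_trans (norm_sum_le _ _) (Finset.sum_le_sum fun i _ => ?_)
  rw [norm_mul, norm_pow]
  exact mul_le_mul_of_nonneg_left
    (pow_le_pow_left₀ (norm_nonneg z) (estar_abs_le hm hz) i) (norm_nonneg _)

lemma weight_bound {α : ℝ} (hα0 : 0 ≤ α) (hα1 : α ≤ 1) (Q : Polynomial ℝ) :
    ∀ x ∈ Set.Icc (-1:ℝ) 1, (1+x) ^ α * |Q.eval x|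
      ≤ 2 * ∑ i ∈ Finset.range (Q.natDegree + 1), |Q.coeff i| := by
  intro x hx
  have h1 : (1+x) ^ α ≤ 2 := by
    calc (1+x) ^ α ≤ (2:ℝ) ^ α :=
          Real.rpow_le_rpow (by linarith [hx.1]) (by linarith [hx.2]) hα0
      _ ≤ (2:ℝ) ^ (1:ℝ) := Real.rpow_le_rpow_of_exponent_le one_le_two hα1
      _ = 2 := Real.rpow_one 2
  have h2 : |Q.eval x| ≤ ∑ i ∈ Finset.range (Q.natDegree + 1), |Q.coeff i| := by
    rw [Polynomial.eval_eq_sum_range]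
    refine le_trans (Finset.abs_sum_le_sum_abs _ _) (Finset.sum_le_sum fun i _ => ?_)
    rw [abs_mul, abs_pow]
    calc |Q.coeff i| * |x| ^ i ≤ |Q.coeff i| * 1 :=
          mul_le_mul_of_nonneg_left (pow_le_one₀ (abs_nonneg x) (abs_le.2 ⟨hx.1, hx.2⟩))
            (abs_nonneg _)
      _ = |Q.coeff i| := mul_one _
  have h0 : (0:ℝ) ≤ (1+x) ^ α := Real.rpow_nonneg (by linarith [hx.1]) _
  calc (1+x) ^ α * |Q.eval x| ≤ 2 * |Q.eval x| :=
        mul_le_mul_of_nonneg_right h1 (abs_nonneg _)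
    _ ≤ 2 * ∑ i ∈ Finset.range (Q.natDegree + 1), |Q.coeff i| := by linarith

/-! ### The easy direction: from `Q` to `P` -/

set_option maxHeartbeats 2000000 in
lemma easy_direction (m n l N : ℕ) (hm : 1 ≤ m) (hl : l < 2*m) (hN : N = n*(2*m) + l)
    (Q : Polynomial ℝ) (hQm : Q.Monic) (hQd : Q.natDegree = n) :
    ∃ P : Polynomial ℂ, P.Monic ∧ P.natDegree = N ∧
      (⨆ z ∈ Estar m, ‖P.eval z‖) =
        (2:ℝ) ^ ((n:ℝ) + (l:ℝ)/(2*(m:ℝ))) *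
          ⨆ x ∈ Set.Icc (-1:ℝ) 1, (1+x) ^ ((l:ℝ)/(2*(m:ℝ))) * |Q.eval x| := by
  have hmR : (0:ℝ) < m := by exact_mod_cast hm
  set d := 2*m with hd_def
  have hd0 : d ≠ 0 := by omega
  set α : ℝ := (l:ℝ)/(2*(m:ℝ)) with hα_def
  have hαd : α = (l:ℝ)/(d:ℝ) := by rw [hα_def, hd_def]; push_cast; ring_nf
  have hα0 : 0 ≤ α := by rw [hα_def]; positivity
  have hα1 : α ≤ 1 := by
    rw [hα_def, div_le_one (by linarith)]
    exact_mod_cast le_of_lt hl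
  set c : ℝ := (2:ℝ) ^ ((n:ℝ) + α) with hc_def
  have hcpos : 0 < c := Real.rpow_pos_of_pos two_pos _
  have hc : c = 2^n * (2:ℝ)^α := by
    rw [hc_def, Real.rpow_add two_pos, Real.rpow_natCast]
  -- construction of P
  set Qc : Polynomial ℂ := Q.map (algebraMap ℝ ℂ) with hQc_def
  have hQcm : Qc.Monic := hQm.map _
  have hQcd : Qc.natDegree = n := by rw [hQc_def, hQm.natDegree_map, hQd]
  set g : Polynomial ℂ := Polynomial.C (2:ℂ)⁻¹ * Polynomial.X ^ d - Polynomial.C 1 with hg_def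
  have hgd : g.natDegree = d := by
    rw [hg_def, Polynomial.natDegree_sub_C, Polynomial.natDegree_C_mul_X_pow _ _ (by norm_num)]
  have hgl : g.leadingCoeff = (2:ℂ)⁻¹ := by
    rw [Polynomial.leadingCoeff, hgd, hg_def]
    simp [Polynomial.coeff_sub, Polynomial.coeff_C_mul, Polynomial.coeff_X_pow,
      Polynomial.coeff_C, Polynomial.coeff_one, hd0]
  have hcompd : (Qc.comp g).natDegree = n * d := by
    rw [Polynomial.natDegree_comp, hQcd, hgd]
  have hcompl : (Qc.comp g).leadingCoeff = (2:ℂ)⁻¹ ^ n := by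
    rw [Polynomial.leadingCoeff_comp (by rw [hgd]; omega), hQcm.leadingCoeff, hgl, one_mul, hQcd]
  have hcomp0 : Qc.comp g ≠ 0 := by
    refine Polynomial.leadingCoeff_ne_zero.1 ?_
    rw [hcompl]
    exact pow_ne_zero _ (by norm_num)
  set P : Polynomial ℂ :=
    Polynomial.C ((2:ℂ)^n) * (Polynomial.X ^ l * (Qc.comp g)) with hP_def
  have hPm : P.Monic := by
    show P.leadingCoeff = 1
    rw [hP_def, Polynomial.leadingCoeff_mul, Polynomial.leadingCoeff_mul,
      Polynomial.leadingCoeff_C, Polynomial.leadingCoeff_X_pow, hcompl, one_mul, ← mul_pow]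
    norm_num
  have hPd : P.natDegree = N := by
    rw [hP_def, Polynomial.natDegree_C_mul (pow_ne_zero _ two_ne_zero),
      Polynomial.natDegree_mul (pow_ne_zero _ Polynomial.X_ne_zero) hcomp0,
      Polynomial.natDegree_X_pow, hcompd, hN]
    ring
  have heval : ∀ z : ℂ, P.eval z = (2:ℂ)^n * (z^l * Qc.eval ((2:ℂ)⁻¹ * z^d - 1)) := by
    intro z
    rw [hP_def]
    simp [hg_def, Polynomial.eval_comp]
  -- the central value identity
  have hval : ∀ t ∈ Set.Icc (-2:ℝ) 2, ∀ z : ℂ, (t:ℂ) = z ^ m →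
      (t^2/2 - 1) ∈ Set.Icc (-1:ℝ) 1 ∧
      ‖P.eval z‖ = c * ((1 + (t^2/2-1)) ^ α * |Q.eval (t^2/2-1)|) := by
    intro t ht z hzt
    have hx1 : (t^2/2 - 1) ∈ Set.Icc (-1:ℝ) 1 := by
      constructor
      · nlinarith [ht.1, ht.2]
      · nlinarith [ht.1, ht.2]
    refine ⟨hx1, ?_⟩
    set x : ℝ := t^2/2 - 1 with hx_def
    have h2x : 2*(1+x) = t^2 := by rw [hx_def]; ring
    have habs : ‖z‖ ^ m = |t| := by rw [← norm_pow, ← hzt, Complex.norm_real, Real.norm_eq_abs]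
    have habsd : ‖z‖ ^ d = 2*(1+x) := by
      rw [hd_def, mul_comm 2 m, pow_mul, habs, sq_abs, h2x]
    have hal : ‖z‖ ^ l = (2*(1+x)) ^ α := by
      rw [hαd]
      exact pow_eq_rpow_of_pow_eq hd0 (norm_nonneg z) (by nlinarith [hx1.1]) habsd
    have hzd : (2:ℂ)⁻¹ * z^d - 1 = ((x:ℝ):ℂ) := by
      have hz2 : z ^ d = ((t^2 : ℝ) : ℂ) := by
        rw [hd_def, mul_comm 2 m, pow_mul, ← hzt]
        push_cast
        ring
      rw [hz2, hx_def]
      push_cast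
      ring
    have hQcx : Qc.eval ((x:ℝ):ℂ) = ((Q.eval x : ℝ) : ℂ) := by
      rw [hQc_def, Polynomial.eval_map, ← Complex.coe_algebraMap, Polynomial.eval₂_at_apply,
        Complex.coe_algebraMap]
    rw [heval z, hzd, hQcx]
    have habs2 : ‖(2:ℂ)^n * (z^l * ((Q.eval x : ℝ):ℂ))‖
        = 2^n * (‖z‖ ^ l * |Q.eval x|) := by
      rw [norm_mul, norm_mul, norm_pow, norm_pow, Complex.norm_two, Complex.norm_real, Real.norm_eq_abs]
    rw [habs2, hal, hc, Real.mul_rpow (by norm_num) (by linarith [hx1.1])]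
    ring
  -- bounds
  have hQB0 : (0:ℝ) ≤ 2 * ∑ i ∈ Finset.range (Q.natDegree + 1), |Q.coeff i| := by positivity
  have hwle := weight_bound hα0 hα1 Q
  have hPB : ∀ z ∈ Estar m, ‖P.eval z‖
      ≤ ∑ i ∈ Finset.range (P.natDegree + 1), ‖P.coeff i‖ * 2 ^ i :=
    fun z hz => abs_eval_le_of_mem hm P hz
  have hPB0 : (0:ℝ) ≤ ∑ i ∈ Finset.range (P.natDegree + 1), ‖P.coeff i‖ * 2 ^ i := by
    positivity
  have hsup0 : (0:ℝ) ≤ ⨆ z ∈ Estar m, ‖P.eval z‖ :=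
    real_biSup_nonneg fun z _ => norm_nonneg _
  have hq0 : (0:ℝ) ≤ ⨆ x ∈ Set.Icc (-1:ℝ) 1, (1+x) ^ α * |Q.eval x| :=
    real_biSup_nonneg fun x hx =>
      mul_nonneg (Real.rpow_nonneg (by linarith [hx.1]) _) (abs_nonneg _)
  refine ⟨P, hPm, hPd, le_antisymm ?_ ?_⟩
  · refine real_biSup_le (by positivity) ?_
    rintro z ⟨t, ht, htz⟩
    obtain ⟨hx1, hveq⟩ := hval t ht z htz
    rw [hveq]
    exact mul_le_mul_of_nonneg_left (le_real_biSup hQB0 hwle hx1) (le_of_lt hcpos)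
  · rw [← le_div_iff₀' hcpos]
    refine real_biSup_le (div_nonneg hsup0 (le_of_lt hcpos)) ?_
    intro x hx
    have h1x : (0:ℝ) ≤ 2*(1+x) := by nlinarith [hx.1]
    set t := Real.sqrt (2*(1+x)) with ht_def
    have ht0 : 0 ≤ t := Real.sqrt_nonneg _
    have ht2 : t^2 = 2*(1+x) := Real.sq_sqrt h1x
    have htle : t ≤ 2 := by nlinarith [hx.2]
    set u := t ^ ((m:ℝ)⁻¹) with hu_def
    have hu0 : 0 ≤ u := Real.rpow_nonneg ht0 _
    have hum : u ^ m = t := by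
      rw [hu_def, ← Real.rpow_natCast (t ^ ((m:ℝ)⁻¹)) m, ← Real.rpow_mul ht0,
        inv_mul_cancel₀ (ne_of_gt hmR), Real.rpow_one]
    have htz : ((t:ℝ):ℂ) = ((u:ℝ):ℂ) ^ m := by
      rw [← Complex.ofReal_pow, hum]
    have htmem : t ∈ Set.Icc (-2:ℝ) 2 := ⟨by linarith, htle⟩
    have hzmem : ((u:ℝ):ℂ) ∈ Estar m := ⟨t, htmem, htz⟩
    have hxeq : t^2/2 - 1 = x := by rw [ht2]; ring
    obtain ⟨_, hveq⟩ := hval t htmem _ htz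
    rw [hxeq] at hveq
    rw [le_div_iff₀ hcpos, mul_comm, ← hveq]
    exact le_real_biSup hPB0 hPB hzmem

/-! ### The hard direction: from `P` to `Q` -/

set_option maxHeartbeats 2000000 in
lemma hard_direction (m n l N : ℕ) (hm : 1 ≤ m) (hl : l < 2*m) (hN : N = n*(2*m) + l)
    (P : Polynomial ℂ) (hPm : P.Monic) (hPd : P.natDegree = N) :
    ∃ Q : Polynomial ℝ, Q.Monic ∧ Q.natDegree = n ∧
      (2:ℝ) ^ ((n:ℝ) + (l:ℝ)/(2*(m:ℝ))) *
        (⨆ x ∈ Set.Icc (-1:ℝ) 1, (1+x) ^ ((l:ℝ)/(2*(m:ℝ))) * |Q.eval x|)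
      ≤ ⨆ z ∈ Estar m, ‖P.eval z‖ := by
  have hmR : (0:ℝ) < m := by exact_mod_cast hm
  set d := 2*m with hd_def
  have hd0 : d ≠ 0 := by omega
  set α : ℝ := (l:ℝ)/(2*(m:ℝ)) with hα_def
  have hαd : α = (l:ℝ)/(d:ℝ) := by rw [hα_def, hd_def]; push_cast; ring_nf
  have hα0 : 0 ≤ α := by rw [hα_def]; positivity
  set c : ℝ := (2:ℝ) ^ ((n:ℝ) + α) with hc_def
  have hcpos : 0 < c := Real.rpow_pos_of_pos two_pos _
  have hc : c = 2^n * (2:ℝ)^α := by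
    rw [hc_def, Real.rpow_add two_pos, Real.rpow_natCast]
  -- the primitive 2m-th root of unity
  set ω : ℂ := Complex.exp (2 * (Real.pi : ℂ) * Complex.I / d) with hω_def
  have hω : IsPrimitiveRoot ω d := Complex.isPrimitiveRoot_exp d hd0
  have hωm : ω ^ m = -1 :=
    IsPrimitiveRoot.eq_neg_one_of_two_right (hω.pow (by omega) (by omega))
  have habsd : ‖ω‖ ^ d = 1 := by rw [← norm_pow, hω.pow_eq_one, norm_one]
  have hωabs : ‖ω‖ = 1 := by
    have h1 := pow_eq_rpow_of_pow_eq (l := 1) hd0 (norm_nonneg ω) zero_le_one habsd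
    simpa using h1
  -- rotated points stay in the star
  have hmem : ∀ (t : ℝ), t ∈ Set.Icc (-2:ℝ) 2 → ∀ z : ℂ, (t:ℂ) = z ^ m →
      ∀ k : ℕ, ω ^ k * z ∈ Estar m := by
    intro t ht z hzt k
    refine ⟨(-1)^k * t, ?_, ?_⟩
    · have habs : |(-1:ℝ)^k * t| ≤ 2 := by
        rw [abs_mul, abs_pow, abs_neg, abs_one, one_pow, one_mul]
        exact abs_le.2 ⟨ht.1, ht.2⟩
      exact abs_le.1 habs
    · push_cast
      rw [mul_pow, ← pow_mul, mul_comm k m, pow_mul, hωm, ← hzt]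
  -- construction of Q
  set R : Polynomial ℝ :=
    ∑ j ∈ Finset.range (n+1), Polynomial.C ((P.coeff (j*d+l)).re) * Polynomial.X ^ j
    with hR_def
  have hRcoeff : ∀ k, k ≤ n → R.coeff k = (P.coeff (k*d+l)).re := by
    intro k hk
    rw [hR_def, Polynomial.finset_sum_coeff]
    rw [Finset.sum_congr rfl
      (fun j _ => by rw [Polynomial.coeff_C_mul, Polynomial.coeff_X_pow])]
    simp only [mul_ite, mul_one, mul_zero]
    rw [Finset.sum_ite_eq]
    simp [Finset.mem_range, Nat.lt_succ_iff, hk]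
  have hRn : R.coeff n = 1 := by
    have hnd : n*d + l = N := hN.symm
    rw [hRcoeff n le_rfl, hnd, ← hPd, ← Polynomial.leadingCoeff, hPm.leadingCoeff,
      Complex.one_re]
  have hRdeg : R.natDegree = n := by
    have hle : R.natDegree ≤ n := by
      rw [hR_def]
      refine Polynomial.natDegree_sum_le_of_forall_le _ _ fun j hj => ?_
      refine le_trans (Polynomial.natDegree_C_mul_le _ _) ?_
      rw [Polynomial.natDegree_X_pow]
      exact Nat.lt_succ_iff.1 (Finset.mem_range.1 hj)
    have hge : n ≤ R.natDegree := Polynomial.le_natDegree_of_ne_zero (by rw [hRn]; norm_num)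
    omega
  have hRm : R.Monic := by
    show R.leadingCoeff = 1
    rw [Polynomial.leadingCoeff, hRdeg, hRn]
  set gR : Polynomial ℝ := Polynomial.C 2 * Polynomial.X + Polynomial.C 2 with hgR_def
  have hgRd : gR.natDegree = 1 := Polynomial.natDegree_linear two_ne_zero
  set Q : Polynomial ℝ := Polynomial.C ((2:ℝ)^n)⁻¹ * (R.comp gR) with hQ_def
  have hQdeg : Q.natDegree = n := by
    rw [hQ_def, Polynomial.natDegree_C_mul (inv_ne_zero (pow_ne_zero _ two_ne_zero)),
      Polynomial.natDegree_comp, hgRd, hRdeg, mul_one]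
  have hQm : Q.Monic := by
    show Q.leadingCoeff = 1
    rw [hQ_def, Polynomial.leadingCoeff_mul, Polynomial.leadingCoeff_C,
      Polynomial.leadingCoeff_comp (by rw [hgRd]; norm_num), hRm.leadingCoeff,
      Polynomial.leadingCoeff_linear two_ne_zero, hRdeg, one_mul]
    field_simp
  have hQeval : ∀ x : ℝ, (2:ℝ)^n * Q.eval x = R.eval (2*(1+x)) := by
    intro x
    have harg : Polynomial.eval x gR = 2*(1+x) := by
      rw [hgR_def]
      simp
      ring
    rw [hQ_def, Polynomial.eval_mul, Polynomial.eval_C, Polynomial.eval_comp, harg,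
      ← mul_assoc, mul_inv_cancel₀ (pow_ne_zero _ two_ne_zero), one_mul]
  -- global bound for P on the star
  have hPB : ∀ z ∈ Estar m, ‖P.eval z‖
      ≤ ∑ i ∈ Finset.range (P.natDegree + 1), ‖P.coeff i‖ * 2 ^ i :=
    fun z hz => abs_eval_le_of_mem hm P hz
  have hPB0 : (0:ℝ) ≤ ∑ i ∈ Finset.range (P.natDegree + 1), ‖P.coeff i‖ * 2 ^ i := by
    positivity
  have hsup0 : (0:ℝ) ≤ ⨆ z ∈ Estar m, ‖P.eval z‖ :=
    real_biSup_nonneg fun z _ => norm_nonneg _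
  have hN' : N = n * d + l := hN
  -- pointwise bound
  have key : ∀ x ∈ Set.Icc (-1:ℝ) 1,
      c * ((1+x) ^ α * |Q.eval x|) ≤ ⨆ z ∈ Estar m, ‖P.eval z‖ := by
    intro x hx
    have h1x : (0:ℝ) ≤ 2*(1+x) := by nlinarith [hx.1]
    set t := Real.sqrt (2*(1+x)) with ht_def
    have ht0 : 0 ≤ t := Real.sqrt_nonneg _
    have ht2 : t^2 = 2*(1+x) := Real.sq_sqrt h1x
    have htle : t ≤ 2 := by nlinarith [hx.2]
    set u := t ^ ((m:ℝ)⁻¹) with hu_def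
    have hu0 : 0 ≤ u := Real.rpow_nonneg ht0 _
    have hum : u ^ m = t := by
      rw [hu_def, ← Real.rpow_natCast (t ^ ((m:ℝ)⁻¹)) m, ← Real.rpow_mul ht0,
        inv_mul_cancel₀ (ne_of_gt hmR), Real.rpow_one]
    have hud : u ^ d = 2*(1+x) := by
      rw [hd_def, mul_comm 2 m, pow_mul, hum, ht2]
    have hul : u ^ l = (2*(1+x)) ^ α := by
      rw [hαd]
      exact pow_eq_rpow_of_pow_eq hd0 hu0 h1x hud
    set z : ℂ := ((u:ℝ):ℂ) with hz_def
    have htz : ((t:ℝ):ℂ) = z ^ m := by rw [hz_def, ← Complex.ofReal_pow, hum]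
    have htmem : t ∈ Set.Icc (-2:ℝ) 2 := ⟨by linarith, htle⟩
    -- the real part identity
    have hcore : u ^ l * R.eval (u ^ d)
        = (∑ j ∈ Finset.range (n+1), P.coeff (j*d+l) * z ^ (j*d+l)).re := by
      rw [Complex.re_sum, hR_def, Polynomial.eval_finset_sum, Finset.mul_sum]
      refine Finset.sum_congr rfl fun j _ => ?_
      have hz2 : (P.coeff (j*d+l) * z ^ (j*d+l)).re = (P.coeff (j*d+l)).re * u^(j*d+l) := by
        rw [hz_def, ← Complex.ofReal_pow, Complex.mul_re, Complex.ofReal_re,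
          Complex.ofReal_im]
        ring
      rw [hz2, Polynomial.eval_mul, Polynomial.eval_C, Polynomial.eval_pow, Polynomial.eval_X,
        ← pow_mul, pow_add, mul_comm d j]
      ring
    have hfil := filter_sum d n l N hd0 hl hN' hω P hPd z
    have hSle : ‖∑ j ∈ Finset.range (n+1), P.coeff (j*d+l) * z ^ (j*d+l)‖
        ≤ ⨆ z ∈ Estar m, ‖P.eval z‖ := by
      have hdR : (0:ℝ) < d := by exact_mod_cast Nat.pos_of_ne_zero hd0
      have habsS : (d:ℝ) * ‖∑ j ∈ Finset.range (n+1), P.coeff (j*d+l) * z ^ (j*d+l)‖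
          = ‖∑ k ∈ Finset.range d, ω ^ (-((k:ℤ)*(N:ℤ))) * P.eval (ω^k*z)‖ := by
        rw [hfil, norm_mul, Complex.norm_natCast]
      have hterm : ∀ k ∈ Finset.range d,
          ‖ω ^ (-((k:ℤ)*(N:ℤ))) * P.eval (ω^k*z)‖
            ≤ ⨆ z ∈ Estar m, ‖P.eval z‖ := by
        intro k _
        rw [norm_mul, norm_zpow, hωabs, one_zpow, one_mul]
        exact le_real_biSup hPB0 hPB (hmem t htmem z htz k)
      have hsum_le : ‖∑ k ∈ Finset.range d, ω ^ (-((k:ℤ)*(N:ℤ))) * P.eval (ω^k*z)‖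
          ≤ (d:ℝ) * ⨆ z ∈ Estar m, ‖P.eval z‖ := by
        refine le_trans (norm_sum_le _ _) ?_
        calc ∑ k ∈ Finset.range d, ‖ω ^ (-((k:ℤ)*(N:ℤ))) * P.eval (ω^k*z)‖
            ≤ ∑ _k ∈ Finset.range d, ⨆ z ∈ Estar m, ‖P.eval z‖ :=
              Finset.sum_le_sum hterm
          _ = (d:ℝ) * ⨆ z ∈ Estar m, ‖P.eval z‖ := by
              rw [Finset.sum_const, Finset.card_range, nsmul_eq_mul]
      have hfin : (d:ℝ) * ‖∑ j ∈ Finset.range (n+1), P.coeff (j*d+l) * z ^ (j*d+l)‖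
          ≤ (d:ℝ) * ⨆ z ∈ Estar m, ‖P.eval z‖ := by
        rw [habsS]
        exact hsum_le
      exact le_of_mul_le_mul_left hfin hdR
    calc c * ((1+x) ^ α * |Q.eval x|)
        = (2:ℝ)^n * (2:ℝ)^α * ((1+x) ^ α * |Q.eval x|) := by rw [hc]
      _ = (2*(1+x)) ^ α * ((2:ℝ)^n * |Q.eval x|) := by
          rw [Real.mul_rpow (by norm_num) (by linarith [hx.1])]
          ring
      _ = (2*(1+x)) ^ α * |(2:ℝ)^n * Q.eval x| := by
          rw [abs_mul, abs_of_pos (by positivity : (0:ℝ) < (2:ℝ)^n)]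
      _ = (2*(1+x)) ^ α * |R.eval (2*(1+x))| := by rw [hQeval]
      _ = |u^l * R.eval (u^d)| := by
          rw [abs_mul, hud, abs_of_nonneg (by positivity : (0:ℝ) ≤ u^l), hul]
      _ = |(∑ j ∈ Finset.range (n+1), P.coeff (j*d+l) * z ^ (j*d+l)).re| := by rw [hcore]
      _ ≤ ‖∑ j ∈ Finset.range (n+1), P.coeff (j*d+l) * z ^ (j*d+l)‖ :=
          Complex.abs_re_le_norm _
      _ ≤ ⨆ z ∈ Estar m, ‖P.eval z‖ := hSle
  refine ⟨Q, hQm, hQdeg, ?_⟩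
  rw [← le_div_iff₀' hcpos]
  exact real_biSup_le (div_nonneg hsup0 (le_of_lt hcpos))
    (fun x hx => (le_div_iff₀' hcpos).2 (key x hx))

set_option maxHeartbeats 2000000 in
/-- The Chebyshev problem on `E_m` of degree `N = 2nm + l` reduces to a weighted
Chebyshev problem on `[-1,1]` with weight `(1+x)^{l/(2m)}`. -/
theorem chebNorm_Estar_eq_weighted (m n l : ℕ) (hm : 1 ≤ m) (hl : l < 2 * m)
    (N : ℕ) (hN : N = 2 * n * m + l) (hN1 : 1 ≤ N) :
    chebNorm (Estar m) N = (2 : ℝ) ^ ((n : ℝ) + (l : ℝ) / (2 * (m : ℝ))) *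
      sInf { r : ℝ | ∃ Q : Polynomial ℝ, Q.Monic ∧ Q.natDegree = n ∧
        r = ⨆ x ∈ Set.Icc (-1 : ℝ) 1,
              (1 + x) ^ ((l : ℝ) / (2 * (m : ℝ))) * |Q.eval x| } := by
  have hN' : N = n * (2*m) + l := by rw [hN]; ring
  set c : ℝ := (2:ℝ) ^ ((n:ℝ) + (l:ℝ)/(2*(m:ℝ))) with hc_def
  have hcpos : 0 < c := Real.rpow_pos_of_pos two_pos _
  set T := { r : ℝ | ∃ Q : Polynomial ℝ, Q.Monic ∧ Q.natDegree = n ∧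
    r = ⨆ x ∈ Set.Icc (-1 : ℝ) 1, (1 + x) ^ ((l : ℝ) / (2 * (m : ℝ))) * |Q.eval x| }
    with hT_def
  unfold chebNorm
  set S := { r : ℝ | ∃ P : Polynomial ℂ, P.Monic ∧ P.natDegree = N ∧
    r = ⨆ z ∈ Estar m, ‖P.eval z‖ } with hS_def
  have hα0 : (0:ℝ) ≤ (l:ℝ)/(2*(m:ℝ)) := by positivity
  have hSne : S.Nonempty :=
    ⟨_, Polynomial.X ^ N, Polynomial.monic_X_pow N, Polynomial.natDegree_X_pow N, rfl⟩
  have hTne : T.Nonempty :=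
    ⟨_, Polynomial.X ^ n, Polynomial.monic_X_pow n, Polynomial.natDegree_X_pow n, rfl⟩
  have hSbdd : BddBelow S := by
    refine ⟨0, ?_⟩
    rintro r ⟨P, _, _, rfl⟩
    exact real_biSup_nonneg fun z _ => norm_nonneg _
  have hTbdd : BddBelow T := by
    refine ⟨0, ?_⟩
    rintro r ⟨Qp, _, _, rfl⟩
    exact real_biSup_nonneg fun x hx =>
      mul_nonneg (Real.rpow_nonneg (by linarith [hx.1]) _) (abs_nonneg _)
  refine le_antisymm ?_ ?_
  · have h1 : ∀ r ∈ T, sInf S ≤ c * r := by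
      rintro r ⟨Qp, hQm, hQd, rfl⟩
      obtain ⟨P, hPm, hPd, hPsup⟩ := easy_direction m n l N hm hl hN' Qp hQm hQd
      have hmemS : (⨆ z ∈ Estar m, ‖P.eval z‖) ∈ S := ⟨P, hPm, hPd, rfl⟩
      calc sInf S ≤ ⨆ z ∈ Estar m, ‖P.eval z‖ := csInf_le hSbdd hmemS
        _ = c * _ := hPsup
    have h2 : sInf S / c ≤ sInf T :=
      le_csInf hTne fun r hr => (div_le_iff₀' hcpos).2 (h1 r hr)
    calc sInf S = c * (sInf S / c) := by field_simp
      _ ≤ c * sInf T := mul_le_mul_of_nonneg_left h2 (le_of_lt hcpos)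
  · refine le_csInf hSne ?_
    rintro s ⟨P, hPm, hPd, rfl⟩
    obtain ⟨Qp, hQm, hQd, hkey⟩ := hard_direction m n l N hm hl hN' P hPm hPd
    have hmemT : (⨆ x ∈ Set.Icc (-1:ℝ) 1, (1+x) ^ ((l:ℝ)/(2*(m:ℝ))) * |Qp.eval x|) ∈ T :=
      ⟨Qp, hQm, hQd, rfl⟩
    calc c * sInf T
        ≤ c * ⨆ x ∈ Set.Icc (-1:ℝ) 1, (1+x) ^ ((l:ℝ)/(2*(m:ℝ))) * |Qp.eval x| :=
          mul_le_mul_of_nonneg_left (csInf_le hTbdd hmemT) (le_of_lt hcpos)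
      _ ≤ ⨆ z ∈ Estar m, ‖P.eval z‖ := hkey
end
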